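/- Let m ≥ n ≥ 6 and S ⊆ V(K_m □ K_n). If every quadruple {(a,v),(a,u),(b,v),(b,u)} (a ≠ b, v ≠ u) contains at least one element of S, then at most one row and at most one column of K_m □ K_n contain at most two elements of S each; equivalently, all but at most one of the rows, and all but at most one of the columns, contain at least three elements of S. -/

import Mathlib

open SimpleGraph

variable {V : Type*}

/-- Distance from a vertex to a set of vertices. -/
noncomputable def dSet (G : SimpleGraph V) (s : V) (X : Set V) : ℕ :=
  sInf ((G.dist s) '' X)

/-- `S` is an `ℓ`-solid-resolving set of `G`. -/
def LSolid (G : SimpleGraph V) (S : Set V) (ℓ : ℕ) : Prop :=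
  ∀ X Y : Set V, X.Nonempty → Y.Nonempty → X.ncard ≤ ℓ → X ≠ Y →
    ∃ s ∈ S, dSet G s X ≠ dSet G s Y

/-- `S` is an `{ℓ}`-resolving set of `G`. -/
def LResolving (G : SimpleGraph V) (S : Set V) (ℓ : ℕ) : Prop :=
  ∀ X Y : Set V, X.Nonempty → Y.Nonempty → X.ncard ≤ ℓ → Y.ncard ≤ ℓ → X ≠ Y →
    ∃ s ∈ S, dSet G s X ≠ dSet G s Y

/-- The `ℓ`-solid-metric dimension of `G`. -/
noncomputable def solidDim (G : SimpleGraph V) (ℓ : ℕ) : ℕ :=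
  sInf {k | ∃ S : Set V, LSolid G S ℓ ∧ S.ncard = k}

/-- The `{ℓ}`-metric dimension of `G`. -/
noncomputable def lDim (G : SimpleGraph V) (ℓ : ℕ) : ℕ :=
  sInf {k | ∃ S : Set V, LResolving G S ℓ ∧ S.ncard = k}

/-- The rook's graph K_m □ K_n. -/
def rook (m n : ℕ) : SimpleGraph (Fin m × Fin n) :=
  (⊤ : SimpleGraph (Fin m)).boxProd (⊤ : SimpleGraph (Fin n))

theorem stmt_14 {m n : ℕ} (hmn : n ≤ m) (hn : 6 ≤ n)
    (S : Finset (Fin m × Fin n))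
    (hquad : ∀ a b : Fin m, ∀ v u : Fin n, a ≠ b → v ≠ u →
      (a, v) ∈ S ∨ (a, u) ∈ S ∨ (b, v) ∈ S ∨ (b, u) ∈ S) :
    {a : Fin m | (S.filter (fun x => x.1 = a)).card ≤ 2}.Subsingleton ∧
      {u : Fin n | (S.filter (fun x => x.2 = u)).card ≤ 2}.Subsingleton := by
  constructor
  · intro a ha b hb
    by_contra h
    simp only [Set.mem_setOf_eq] at ha hb
    have hca : (Finset.univ.filter (fun u : Fin n => (a, u) ∈ S)).card ≤ 2 := by
      refine le_trans (Finset.card_le_card_of_injOn (fun u => (a, u)) ?_ ?_) ha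
      · intro u hu; simp only [Finset.mem_coe, Finset.mem_filter, Finset.mem_univ, true_and] at hu
        exact Finset.mem_filter.mpr ⟨hu, rfl⟩
      · intro x _ y _ hxy; exact (Prod.ext_iff.mp hxy).2
    have hcb : (Finset.univ.filter (fun u : Fin n => (b, u) ∈ S)).card ≤ 2 := by
      refine le_trans (Finset.card_le_card_of_injOn (fun u => (b, u)) ?_ ?_) hb
      · intro u hu; simp only [Finset.mem_coe, Finset.mem_filter, Finset.mem_univ, true_and] at hu
        exact Finset.mem_filter.mpr ⟨hu, rfl⟩
      · intro x _ y _ hxy; exact (Prod.ext_iff.mp hxy).2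
    set T := (Finset.univ.filter (fun u : Fin n => (a, u) ∈ S)) ∪
      (Finset.univ.filter (fun u : Fin n => (b, u) ∈ S)) with hT
    have hTc : T.card ≤ 4 := le_trans (Finset.card_union_le _ _) (by omega)
    have hcompl : 1 < Tᶜ.card := by
      have := Finset.card_compl T
      simp only [Fintype.card_fin] at this
      omega
    obtain ⟨v, hv, u, hu, hvu⟩ := Finset.one_lt_card.mp hcompl
    simp only [hT, Finset.mem_compl, Finset.mem_union, Finset.mem_filter,
      Finset.mem_univ, true_and, not_or] at hv hu
    rcases hquad a b v u h hvu with h1 | h1 | h1 | h1 <;> tauto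
  · intro a ha b hb
    by_contra h
    simp only [Set.mem_setOf_eq] at ha hb
    have hca : (Finset.univ.filter (fun x : Fin m => (x, a) ∈ S)).card ≤ 2 := by
      refine le_trans (Finset.card_le_card_of_injOn (fun x => (x, a)) ?_ ?_) ha
      · intro x hx; simp only [Finset.mem_coe, Finset.mem_filter, Finset.mem_univ, true_and] at hx
        exact Finset.mem_filter.mpr ⟨hx, rfl⟩
      · intro x _ y _ hxy; exact (Prod.ext_iff.mp hxy).1
    have hcb : (Finset.univ.filter (fun x : Fin m => (x, b) ∈ S)).card ≤ 2 := by
      refine le_trans (Finset.card_le_card_of_injOn (fun x => (x, b)) ?_ ?_) hb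
      · intro x hx; simp only [Finset.mem_coe, Finset.mem_filter, Finset.mem_univ, true_and] at hx
        exact Finset.mem_filter.mpr ⟨hx, rfl⟩
      · intro x _ y _ hxy; exact (Prod.ext_iff.mp hxy).1
    set T := (Finset.univ.filter (fun x : Fin m => (x, a) ∈ S)) ∪
      (Finset.univ.filter (fun x : Fin m => (x, b) ∈ S)) with hT
    have hTc : T.card ≤ 4 := le_trans (Finset.card_union_le _ _) (by omega)
    have hcompl : 1 < Tᶜ.card := by
      have := Finset.card_compl T
      simp only [Fintype.card_fin] at this
      omega
    obtain ⟨v, hv, u, hu, hvu⟩ := Finset.one_lt_card.mp hcompl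
    simp only [hT, Finset.mem_compl, Finset.mem_union, Finset.mem_filter,
      Finset.mem_univ, true_and, not_or] at hv hu
    rcases hquad v u a b hvu h with h1 | h1 | h1 | h1 <;> tauto
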